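/- Let G be a cube-free median graph and let b be any vertex of G. Then every vertex x of G has at most two neighbors y with d_G(b,y) = d_G(b,x) − 1. -/

import Mathlib

open SimpleGraph

/-- The metric interval between `u` and `v` in a graph `G`. -/
def gInterval {V : Type} (G : SimpleGraph V) (u v : V) : Set V :=
  {z | G.dist u z + G.dist z v = G.dist u v}

/-- `G` is a median graph: it is connected and every triple of vertices has a
unique median. -/
def IsMedianGraph {V : Type} (G : SimpleGraph V) : Prop :=
  G.Connected ∧ ∀ u v w : V,
    ∃! m : V, m ∈ gInterval G u v ∧ m ∈ gInterval G v w ∧ m ∈ gInterval G u w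

/-- The 3-dimensional hypercube graph `Q₃`: vertices are functions
`Fin 3 → Bool`, two vertices being adjacent iff they differ in exactly one
coordinate. -/
def cubeGraph : SimpleGraph (Fin 3 → Bool) :=
  SimpleGraph.fromRel (fun x y => ∃! i : Fin 3, x i ≠ y i)

/-- A graph is cube-free if it has no induced subgraph isomorphic to `Q₃`
(graph embeddings in the sense of `↪g` are exactly induced-subgraph
embeddings). -/
def CubeFree {V : Type} (G : SimpleGraph V) : Prop :=
  IsEmpty (cubeGraph ↪g G)

instance : DecidableRel cubeGraph.Adj := fun a b =>
  decidable_of_iff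
    (a ≠ b ∧ ((∃ i : Fin 3, (a i ≠ b i) ∧ ∀ j : Fin 3, a j ≠ b j → j = i) ∨
      (∃ i : Fin 3, (b i ≠ a i) ∧ ∀ j : Fin 3, b j ≠ a j → j = i))) Iff.rfl

lemma vec_eq3 (v : Fin 3 → Bool) : v = ![v 0, v 1, v 2] := by
  funext i; fin_cases i <;> rfl

section Median

variable {V : Type} {G : SimpleGraph V}

lemma mem_gInterval {u v z : V} :
    z ∈ gInterval G u v ↔ G.dist u z + G.dist z v = G.dist u v := Iff.rfl

lemma dcomm (G : SimpleGraph V) (u v : V) : G.dist u v = G.dist v u :=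
  SimpleGraph.dist_comm

/-- Along an edge, the distance to any base vertex changes by exactly one. -/
lemma adj_step (hG : IsMedianGraph G) (b : V) {u v : V} (h : G.Adj u v) :
    G.dist b u + 1 = G.dist b v ∨ G.dist b v + 1 = G.dist b u := by
  obtain ⟨m, ⟨h1, h2, h3⟩, -⟩ := hG.2 u v b
  rw [mem_gInterval] at h1 h2 h3
  have huv : G.dist u v = 1 := dist_eq_one_iff_adj.mpr h
  have hum : G.dist u m = 0 ∨ G.dist m v = 0 := by omega
  rcases hum with h0 | h0
  · have : u = m := (hG.1.dist_eq_zero_iff).mp h0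
    subst this
    have c1 : G.dist v u = G.dist u v := dcomm G v u
    have c2 : G.dist u b = G.dist b u := dcomm G u b
    have c3 : G.dist v b = G.dist b v := dcomm G v b
    left; omega
  · have hmv : m = v := (hG.1.dist_eq_zero_iff).mp h0
    rw [hmv] at h3
    have c2 : G.dist u b = G.dist b u := dcomm G u b
    have c3 : G.dist v b = G.dist b v := dcomm G v b
    right; omega

lemma walk_parity (hG : IsMedianGraph G) (b : V) {u v : V} (p : G.Walk u v) :
    (p.length + G.dist b u + G.dist b v) % 2 = 0 := by
  induction p with
  | nil => simp only [SimpleGraph.Walk.length_nil]; omega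
  | cons h p ih =>
    have := adj_step hG b h
    simp only [SimpleGraph.Walk.length_cons]
    omega

lemma dist_parity (hG : IsMedianGraph G) (b u v : V) :
    (G.dist u v + G.dist b u + G.dist b v) % 2 = 0 := by
  obtain ⟨p, hp⟩ := (hG.1.preconnected u v).exists_walk_length_eq_dist
  rw [← hp]
  exact walk_parity hG b p

/-- Two equidistant-from-`b` vertices at distance 2 have a common lower neighbour. -/
lemma square_lemma (hG : IsMedianGraph G) (b : V) {u v : V} (h2 : G.dist u v = 2)
    (heq : G.dist b u = G.dist b v) :
    ∃ m, G.Adj u m ∧ G.Adj v m ∧ G.dist b m + 1 = G.dist b u := by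
  obtain ⟨m, ⟨h1, hA, hB⟩, -⟩ := hG.2 u v b
  rw [mem_gInterval] at h1 hA hB
  rw [dcomm G v m, dcomm G m b] at hA
  rw [dcomm G m b] at hB
  rw [dcomm G b u, dcomm G b v] at heq
  -- h1 : dist u m + dist m v = 2, hA : dist m v + dist b m = dist v b,
  -- hB : dist u m + dist b m = dist u b, heq : dist u b = dist v b
  have hum : G.dist u m = 1 := by omega
  have hmv : G.dist m v = 1 := by omega
  refine ⟨m, dist_eq_one_iff_adj.mp hum, dist_eq_one_iff_adj.mp (by rwa [dcomm G v m]), ?_⟩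
  rw [dcomm G b u]
  omega

/-- If `p q r` are pairwise at distance 2, then they have at most one common
neighbour. -/
lemma med_unique (hG : IsMedianGraph G) {p q r a c : V}
    (hpq : G.dist p q = 2) (hqr : G.dist q r = 2) (hpr : G.dist p r = 2)
    (hap : G.Adj p a) (haq : G.Adj q a) (har : G.Adj r a)
    (hcp : G.Adj p c) (hcq : G.Adj q c) (hcr : G.Adj r c) : a = c := by
  obtain ⟨m, -, hu⟩ := hG.2 p q r
  have key : ∀ z : V, G.Adj p z → G.Adj q z → G.Adj r z →
      z ∈ gInterval G p q ∧ z ∈ gInterval G q r ∧ z ∈ gInterval G p r := by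
    intro z h1 h2 h3
    have d1 : G.dist p z = 1 := dist_eq_one_iff_adj.mpr h1
    have d2 : G.dist q z = 1 := dist_eq_one_iff_adj.mpr h2
    have d3 : G.dist r z = 1 := dist_eq_one_iff_adj.mpr h3
    refine ⟨?_, ?_, ?_⟩ <;> rw [mem_gInterval]
    · rw [d1, dcomm G z q, d2, hpq]
    · rw [d2, dcomm G z r, d3, hqr]
    · rw [d1, dcomm G z r, d3, hpr]
  exact (hu a (key a hap haq har)).trans (hu c (key c hcp hcq hcr)).symm

lemma dist_two (hc : G.Connected) {u v w : V} (hne : u ≠ v) (hnadj : ¬G.Adj u v)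
    (h1 : G.Adj u w) (h2 : G.Adj w v) : G.dist u v = 2 := by
  have hle : G.dist u v ≤ G.dist u w + G.dist w v := hc.dist_triangle
  rw [dist_eq_one_iff_adj.mpr h1, dist_eq_one_iff_adj.mpr h2] at hle
  have h0 : G.dist u v ≠ 0 := fun h => hne (hc.dist_eq_zero_iff.mp h)
  have hone : G.dist u v ≠ 1 := fun h => hnadj (dist_eq_one_iff_adj.mp h)
  omega

end Median

def cubeMap {V : Type} (x y₁ y₂ y₃ w₁₂ w₁₃ w₂₃ z : V) (v : Fin 3 → Bool) : V :=
  if v 0 then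
    (if v 1 then (if v 2 then x else y₃) else (if v 2 then y₂ else w₂₃))
  else
    (if v 1 then (if v 2 then y₁ else w₁₃) else (if v 2 then w₁₂ else z))

set_option maxHeartbeats 2000000 in
def buildCube {V : Type} (G : SimpleGraph V) (x y₁ y₂ y₃ w₁₂ w₁₃ w₂₃ z : V)
    (axy₁ : G.Adj x y₁) (axy₂ : G.Adj x y₂) (axy₃ : G.Adj x y₃)
    (ay₁w₁₂ : G.Adj y₁ w₁₂) (ay₂w₁₂ : G.Adj y₂ w₁₂)
    (ay₁w₁₃ : G.Adj y₁ w₁₃) (ay₃w₁₃ : G.Adj y₃ w₁₃)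
    (ay₂w₂₃ : G.Adj y₂ w₂₃) (ay₃w₂₃ : G.Adj y₃ w₂₃)
    (azw₁₂ : G.Adj z w₁₂) (azw₁₃ : G.Adj z w₁₃) (azw₂₃ : G.Adj z w₂₃)
    (nxw₁₂ : ¬G.Adj x w₁₂) (nxw₁₃ : ¬G.Adj x w₁₃) (nxw₂₃ : ¬G.Adj x w₂₃)
    (nxz : ¬G.Adj x z)
    (ny₁y₂ : ¬G.Adj y₁ y₂) (ny₁y₃ : ¬G.Adj y₁ y₃) (ny₂y₃ : ¬G.Adj y₂ y₃)
    (ny₁w₂₃ : ¬G.Adj y₁ w₂₃) (ny₂w₁₃ : ¬G.Adj y₂ w₁₃) (ny₃w₁₂ : ¬G.Adj y₃ w₁₂)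
    (nzy₁ : ¬G.Adj z y₁) (nzy₂ : ¬G.Adj z y₂) (nzy₃ : ¬G.Adj z y₃)
    (nw₁₂w₁₃ : ¬G.Adj w₁₂ w₁₃) (nw₁₂w₂₃ : ¬G.Adj w₁₂ w₂₃) (nw₁₃w₂₃ : ¬G.Adj w₁₃ w₂₃)
    (exy₁ : x ≠ y₁) (exy₂ : x ≠ y₂) (exy₃ : x ≠ y₃)
    (exw₁₂ : x ≠ w₁₂) (exw₁₃ : x ≠ w₁₃) (exw₂₃ : x ≠ w₂₃) (exz : x ≠ z)
    (ey₁y₂ : y₁ ≠ y₂) (ey₁y₃ : y₁ ≠ y₃) (ey₂y₃ : y₂ ≠ y₃)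
    (ey₁w₁₂ : y₁ ≠ w₁₂) (ey₁w₁₃ : y₁ ≠ w₁₃) (ey₁w₂₃ : y₁ ≠ w₂₃)
    (ey₂w₁₂ : y₂ ≠ w₁₂) (ey₂w₁₃ : y₂ ≠ w₁₃) (ey₂w₂₃ : y₂ ≠ w₂₃)
    (ey₃w₁₂ : y₃ ≠ w₁₂) (ey₃w₁₃ : y₃ ≠ w₁₃) (ey₃w₂₃ : y₃ ≠ w₂₃)
    (ey₁z : y₁ ≠ z) (ey₂z : y₂ ≠ z) (ey₃z : y₃ ≠ z)
    (ew₁₂w₁₃ : w₁₂ ≠ w₁₃) (ew₁₂w₂₃ : w₁₂ ≠ w₂₃) (ew₁₃w₂₃ : w₁₃ ≠ w₂₃)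
    (ew₁₂z : w₁₂ ≠ z) (ew₁₃z : w₁₃ ≠ z) (ew₂₃z : w₂₃ ≠ z) :
    cubeGraph ↪g G := by
  have hrel : ∀ a b : Fin 3 → Bool,
      G.Adj (cubeMap x y₁ y₂ y₃ w₁₂ w₁₃ w₂₃ z a) (cubeMap x y₁ y₂ y₃ w₁₂ w₁₃ w₂₃ z b) ↔
        cubeGraph.Adj a b := by
    intro a b
    rcases Bool.eq_false_or_eq_true (a 0) with h0|h0 <;>
    rcases Bool.eq_false_or_eq_true (a 1) with h1|h1 <;>
    rcases Bool.eq_false_or_eq_true (a 2) with h2|h2 <;>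
    rcases Bool.eq_false_or_eq_true (b 0) with k0|k0 <;>
    rcases Bool.eq_false_or_eq_true (b 1) with k1|k1 <;>
    rcases Bool.eq_false_or_eq_true (b 2) with k2|k2 <;>
    rw [vec_eq3 a, vec_eq3 b, h0, h1, h2, k0, k1, k2] <;>
    simp only [cubeMap, Matrix.cons_val_zero, Matrix.cons_val_one, Matrix.head_cons,
      Matrix.cons_val_two, Matrix.tail_cons, if_true, if_false, Bool.false_eq_true,
      ite_true, ite_false] <;>
    first
      | exact iff_of_true (by assumption) (by decide)
      | exact iff_of_true (by apply SimpleGraph.Adj.symm; assumption) (by decide)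
      | exact iff_of_false (by assumption) (by decide)
      | exact iff_of_false (by intro hh; exact absurd hh.symm (by assumption)) (by decide)
      | exact iff_of_false (G.loopless.irrefl _) (by decide)
  have hinj : Function.Injective (cubeMap x y₁ y₂ y₃ w₁₂ w₁₃ w₂₃ z) := by
    intro a b hab
    rcases Bool.eq_false_or_eq_true (a 0) with h0|h0 <;>
    rcases Bool.eq_false_or_eq_true (a 1) with h1|h1 <;>
    rcases Bool.eq_false_or_eq_true (a 2) with h2|h2 <;>
    rcases Bool.eq_false_or_eq_true (b 0) with k0|k0 <;>
    rcases Bool.eq_false_or_eq_true (b 1) with k1|k1 <;>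
    rcases Bool.eq_false_or_eq_true (b 2) with k2|k2 <;>
    simp only [cubeMap, h0, h1, h2, k0, k1, k2, if_true, if_false,
      Bool.false_eq_true, ite_true, ite_false] at hab <;>
    first
      | exact absurd hab (by assumption)
      | exact absurd hab.symm (by assumption)
      | rw [vec_eq3 a, vec_eq3 b, h0, h1, h2, k0, k1, k2]
  exact ⟨⟨cubeMap x y₁ y₂ y₃ w₁₂ w₁₃ w₂₃ z, hinj⟩, hrel _ _⟩

/-- In a cube-free median graph `G`, for any base vertex `b`, every vertex `x`
has at most two neighbors `y` with `d(b, y) = d(b, x) − 1`. -/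
theorem cubeFree_median_at_most_two_down_neighbors {V : Type}
    (G : SimpleGraph V) (hG : IsMedianGraph G) (hcf : CubeFree G) (b : V) :
    ∀ x y₁ y₂ y₃ : V,
      G.Adj x y₁ → G.Adj x y₂ → G.Adj x y₃ →
      G.dist b y₁ + 1 = G.dist b x → G.dist b y₂ + 1 = G.dist b x →
      G.dist b y₃ + 1 = G.dist b x →
      y₁ = y₂ ∨ y₁ = y₃ ∨ y₂ = y₃ := by
  intro x y₁ y₂ y₃ hxy1 hxy2 hxy3 hd1 hd2 hd3
  by_contra hcon
  push_neg at hcon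
  obtain ⟨n12, n13, n23⟩ := hcon
  have hc := hG.1
  have nadj : ∀ u v : V, G.dist b u = G.dist b v → ¬G.Adj u v := by
    intro u v he hadj
    rcases adj_step hG b hadj with h | h <;> omega
  have neqd : ∀ u v : V, G.dist b u ≠ G.dist b v → u ≠ v :=
    fun u v hd h => hd (by rw [h])
  have ny12 : ¬G.Adj y₁ y₂ := nadj _ _ (by omega)
  have ny13 : ¬G.Adj y₁ y₃ := nadj _ _ (by omega)
  have ny23 : ¬G.Adj y₂ y₃ := nadj _ _ (by omega)
  have dy12 : G.dist y₁ y₂ = 2 := dist_two hc n12 ny12 hxy1.symm hxy2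
  have dy13 : G.dist y₁ y₃ = 2 := dist_two hc n13 ny13 hxy1.symm hxy3
  have dy23 : G.dist y₂ y₃ = 2 := dist_two hc n23 ny23 hxy2.symm hxy3
  obtain ⟨w₁₂, hw12a, hw12b, hw12d⟩ := square_lemma hG b dy12 (by omega)
  obtain ⟨w₁₃, hw13a, hw13b, hw13d⟩ := square_lemma hG b dy13 (by omega)
  obtain ⟨w₂₃, hw23a, hw23b, hw23d⟩ := square_lemma hG b dy23 (by omega)
  -- x vs the w's
  have nxw12 : ¬G.Adj x w₁₂ := fun h => by
    rcases adj_step hG b h with h' | h' <;> omega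
  have nxw13 : ¬G.Adj x w₁₃ := fun h => by
    rcases adj_step hG b h with h' | h' <;> omega
  have nxw23 : ¬G.Adj x w₂₃ := fun h => by
    rcases adj_step hG b h with h' | h' <;> omega
  have exw12 : x ≠ w₁₂ := neqd _ _ (by omega)
  have exw13 : x ≠ w₁₃ := neqd _ _ (by omega)
  have exw23 : x ≠ w₂₃ := neqd _ _ (by omega)
  have dxw12 : G.dist x w₁₂ = 2 := dist_two hc exw12 nxw12 hxy1 hw12a
  have dxw13 : G.dist x w₁₃ = 2 := dist_two hc exw13 nxw13 hxy1 hw13a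
  have dxw23 : G.dist x w₂₃ = 2 := dist_two hc exw23 nxw23 hxy2 hw23a
  -- the w's are pairwise distinct
  have ew1213 : w₁₂ ≠ w₁₃ := by
    intro h
    have : x = w₁₂ := med_unique hG dy12 dy23 dy13 hxy1.symm hxy2.symm hxy3.symm
      hw12a hw12b (by rw [h]; exact hw13b)
    exact exw12 this
  have ew1223 : w₁₂ ≠ w₂₃ := by
    intro h
    have : x = w₁₂ := med_unique hG dy12 dy23 dy13 hxy1.symm hxy2.symm hxy3.symm
      hw12a hw12b (by rw [h]; exact hw23b)
    exact exw12 this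
  have ew1323 : w₁₃ ≠ w₂₃ := by
    intro h
    have : x = w₁₃ := med_unique hG dy12 dy23 dy13 hxy1.symm hxy2.symm hxy3.symm
      hw13a (by rw [h]; exact hw23a) hw13b
    exact exw13 this
  -- the w's are pairwise non-adjacent, at distance 2
  have nw1213 : ¬G.Adj w₁₂ w₁₃ := nadj _ _ (by omega)
  have nw1223 : ¬G.Adj w₁₂ w₂₃ := nadj _ _ (by omega)
  have nw1323 : ¬G.Adj w₁₃ w₂₃ := nadj _ _ (by omega)
  have dw1213 : G.dist w₁₂ w₁₃ = 2 := dist_two hc ew1213 nw1213 hw12a.symm hw13a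
  have dw1223 : G.dist w₁₂ w₂₃ = 2 := dist_two hc ew1223 nw1223 hw12b.symm hw23a
  have dw1323 : G.dist w₁₃ w₂₃ = 2 := dist_two hc ew1323 nw1323 hw13b.symm hw23b
  -- no cross edges between the y's and the w's
  have ny1w23 : ¬G.Adj y₁ w₂₃ := by
    intro h
    exact n12 (med_unique hG dxw12 dw1223 dxw23 hxy1 hw12a.symm h.symm
      hxy2 hw12b.symm hw23a.symm)
  have ny2w13 : ¬G.Adj y₂ w₁₃ := by
    intro h
    exact n12 (med_unique hG dxw12 dw1213 dxw13 hxy2 hw12b.symm h.symm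
      hxy1 hw12a.symm hw13a.symm).symm
  have ny3w12 : ¬G.Adj y₃ w₁₂ := by
    intro h
    exact n13 (med_unique hG dxw12 dw1213 dxw13 hxy3 h.symm hw13b.symm
      hxy1 hw12a.symm hw13a.symm).symm
  -- the bottom vertex z
  obtain ⟨z, ⟨hz1, hz2, hz3⟩, -⟩ := hG.2 w₁₂ w₁₃ w₂₃
  rw [mem_gInterval, dw1213] at hz1
  rw [mem_gInterval, dw1323] at hz2
  rw [mem_gInterval, dw1223] at hz3
  have cB : G.dist w₁₃ z = G.dist z w₁₃ := dcomm G w₁₃ z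
  have hA : G.dist w₁₂ z = 1 := by omega
  have hB : G.dist z w₁₃ = 1 := by omega
  have hC : G.dist z w₂₃ = 1 := by omega
  have azw12 : G.Adj z w₁₂ := (dist_eq_one_iff_adj.mp hA).symm
  have azw13 : G.Adj z w₁₃ := dist_eq_one_iff_adj.mp hB
  have azw23 : G.Adj z w₂₃ := dist_eq_one_iff_adj.mp hC
  have hA' : G.dist z w₁₂ = 1 := by rw [dcomm G z w₁₂]; exact hA
  -- z is distinct from everything above
  have ey1z : y₁ ≠ z := fun h => ny1w23 (by rw [h]; exact azw23)
  have ey2z : y₂ ≠ z := fun h => ny2w13 (by rw [h]; exact azw13)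
  have ey3z : y₃ ≠ z := fun h => ny3w12 (by rw [h]; exact azw12)
  have exz : x ≠ z := fun h => nxw12 (by rw [h]; exact azw12)
  -- z is not adjacent to the y's
  have nzy1 : ¬G.Adj z y₁ := by
    intro h
    have tri : G.dist y₁ w₂₃ ≤ G.dist y₁ z + G.dist z w₂₃ := hc.dist_triangle
    have hy1z : G.dist y₁ z = 1 := dist_eq_one_iff_adj.mpr h.symm
    have par := dist_parity hG b y₁ w₂₃
    have hne1 : G.dist y₁ w₂₃ ≠ 1 := fun hh => ny1w23 (dist_eq_one_iff_adj.mp hh)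
    omega
  have nzy2 : ¬G.Adj z y₂ := by
    intro h
    have tri : G.dist y₂ w₁₃ ≤ G.dist y₂ z + G.dist z w₁₃ := hc.dist_triangle
    have hy2z : G.dist y₂ z = 1 := dist_eq_one_iff_adj.mpr h.symm
    have par := dist_parity hG b y₂ w₁₃
    have hne1 : G.dist y₂ w₁₃ ≠ 1 := fun hh => ny2w13 (dist_eq_one_iff_adj.mp hh)
    omega
  have nzy3 : ¬G.Adj z y₃ := by
    intro h
    have tri : G.dist y₃ w₁₂ ≤ G.dist y₃ z + G.dist z w₁₂ := hc.dist_triangle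
    have hy3z : G.dist y₃ z = 1 := dist_eq_one_iff_adj.mpr h.symm
    have par := dist_parity hG b y₃ w₁₂
    have hne1 : G.dist y₃ w₁₂ ≠ 1 := fun hh => ny3w12 (dist_eq_one_iff_adj.mp hh)
    omega
  -- x is not adjacent to z
  have dzy1 : G.dist y₁ z = 2 :=
    dist_two hc ey1z (fun hh => nzy1 hh.symm) hw12a azw12.symm
  have dzy2 : G.dist y₂ z = 2 :=
    dist_two hc ey2z (fun hh => nzy2 hh.symm) hw12b azw12.symm
  have nxz : ¬G.Adj x z := by
    intro h
    have : x = w₁₂ := med_unique hG dy12 dzy2 dzy1 hxy1.symm hxy2.symm h.symm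
      hw12a hw12b azw12
    exact exw12 this
  -- assemble the cube
  exact hcf.false (buildCube G x y₁ y₂ y₃ w₁₂ w₁₃ w₂₃ z
    hxy1 hxy2 hxy3 hw12a hw12b hw13a hw13b hw23a hw23b azw12 azw13 azw23
    nxw12 nxw13 nxw23 nxz ny12 ny13 ny23 ny1w23 ny2w13 ny3w12 nzy1 nzy2 nzy3
    nw1213 nw1223 nw1323
    (neqd _ _ (by omega)) (neqd _ _ (by omega)) (neqd _ _ (by omega))
    exw12 exw13 exw23 exz
    n12 n13 n23
    (neqd _ _ (by omega)) (neqd _ _ (by omega)) (neqd _ _ (by omega))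
    (neqd _ _ (by omega)) (neqd _ _ (by omega)) (neqd _ _ (by omega))
    (neqd _ _ (by omega)) (neqd _ _ (by omega)) (neqd _ _ (by omega))
    ey1z ey2z ey3z
    ew1213 ew1223 ew1323
    azw12.ne.symm azw13.ne.symm azw23.ne.symm)
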